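/- Let A = (μ_A, λ_A) be an intuitionistic fuzzy Lie ideal of an n-Lie algebra L. Then the set L/A of cosets x + A, with operations (x+A) + (y+A) = (x+y) + A, α(x+A) = αx + A, and [(x_1+A),...,(x_n+A)] = [x_1,...,x_n] + A, is a well-defined n-Lie algebra. -/

import Mathlib

open Function

/-- An `n`-Lie algebra structure (Filippov algebra) on a module `L` over a field `F`:
an `n`-linear bracket that is skew-symmetric and satisfies the Filippov identity. -/
structure NLieAlgebra (F : Type*) [Field F] (n : ℕ) [NeZero n] (L : Type*)
    [AddCommGroup L] [Module F L] where
  bracket : MultilinearMap F (fun _ : Fin n => L) L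
  skew : ∀ (σ : Equiv.Perm (Fin n)) (x : Fin n → L),
    bracket (x ∘ σ) = (Equiv.Perm.sign σ : ℤ) • bracket x
  filippov : ∀ (x y : Fin n → L),
    bracket (Function.update y 0 (bracket x)) =
      ∑ i : Fin n, bracket (Function.update x i (bracket (Function.update y 0 (x i))))

/-- `(μ, lam)` is an intuitionistic fuzzy set: both take values in `[0,1]` and `μ + lam ≤ 1`. -/
def IsIFS {L : Type*} (μ lam : L → ℝ) : Prop :=
  ∀ x, 0 ≤ μ x ∧ μ x ≤ 1 ∧ 0 ≤ lam x ∧ lam x ≤ 1 ∧ μ x + lam x ≤ 1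

/-- Intuitionistic fuzzy Lie subalgebra of an `n`-Lie algebra. -/
def IsIFSubalgebra {F : Type*} [Field F] {n : ℕ} [NeZero n] {L : Type*}
    [AddCommGroup L] [Module F L] (A : NLieAlgebra F n L) (μ lam : L → ℝ) : Prop :=
  IsIFS μ lam ∧
  (∀ x y : L, μ (x + y) ≥ min (μ x) (μ y)) ∧
  (∀ x y : L, lam (x + y) ≤ max (lam x) (lam y)) ∧
  (∀ (α : F) (x : L), μ (α • x) ≥ μ x) ∧
  (∀ (α : F) (x : L), lam (α • x) ≤ lam x) ∧
  (∀ x : Fin n → L, μ (A.bracket x) ≥ ⨅ i, μ (x i)) ∧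
  (∀ x : Fin n → L, lam (A.bracket x) ≤ ⨆ i, lam (x i))

/-- Intuitionistic fuzzy Lie ideal of an `n`-Lie algebra. -/
def IsIFIdeal {F : Type*} [Field F] {n : ℕ} [NeZero n] {L : Type*}
    [AddCommGroup L] [Module F L] (A : NLieAlgebra F n L) (μ lam : L → ℝ) : Prop :=
  IsIFS μ lam ∧
  (∀ x y : L, μ (x + y) ≥ min (μ x) (μ y)) ∧
  (∀ x y : L, lam (x + y) ≤ max (lam x) (lam y)) ∧
  (∀ (α : F) (x : L), μ (α • x) ≥ μ x) ∧
  (∀ (α : F) (x : L), lam (α • x) ≤ lam x) ∧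
  (∀ x : Fin n → L, μ (A.bracket x) ≥ ⨆ i, μ (x i)) ∧
  (∀ x : Fin n → L, lam (A.bracket x) ≤ ⨅ i, lam (x i))

/-- A (crisp) `n`-Lie subalgebra: a linear subspace closed under the bracket. -/
def IsNLieSubalgebra {F : Type*} [Field F] {n : ℕ} [NeZero n] {L : Type*}
    [AddCommGroup L] [Module F L] (A : NLieAlgebra F n L) (S : Set L) : Prop :=
  (0 : L) ∈ S ∧ (∀ x y : L, x ∈ S → y ∈ S → x + y ∈ S) ∧
  (∀ (α : F) (x : L), x ∈ S → α • x ∈ S) ∧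
  (∀ x : Fin n → L, (∀ i, x i ∈ S) → A.bracket x ∈ S)

/-- A (crisp) ideal of an `n`-Lie algebra: a linear subspace `I` such that
`[x_1, …, x_n] ∈ I` whenever some `x_i ∈ I`. -/
def IsNLieIdeal {F : Type*} [Field F] {n : ℕ} [NeZero n] {L : Type*}
    [AddCommGroup L] [Module F L] (A : NLieAlgebra F n L) (S : Set L) : Prop :=
  (0 : L) ∈ S ∧ (∀ x y : L, x ∈ S → y ∈ S → x + y ∈ S) ∧
  (∀ (α : F) (x : L), x ∈ S → α • x ∈ S) ∧
  (∀ x : Fin n → L, (∃ i, x i ∈ S) → A.bracket x ∈ S)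

/-- The coset `x + A` of an intuitionistic fuzzy ideal `A = (μ, lam)`, as the pair of
functions `z ↦ (μ(z - x), lam(z - x))`. -/
def coset {L : Type*} [AddCommGroup L] (μ lam : L → ℝ) (x : L) : L → ℝ × ℝ :=
  fun z => (μ (z - x), lam (z - x))

section Aux

variable {F : Type*} [Field F] {n : ℕ} [NeZero n] {L : Type*}
    [AddCommGroup L] [Module F L]

/-- Membership in the "kernel" of the intuitionistic fuzzy ideal. -/
def Kmem (μ lam : L → ℝ) (t : L) : Prop := μ t = μ 0 ∧ lam t = lam 0

variable {A : NLieAlgebra F n L} {μ lam : L → ℝ}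

lemma mu_le_zero (h : IsIFIdeal A μ lam) (t : L) : μ t ≤ μ 0 := by
  have := h.2.2.2.1 (0 : F) t
  rwa [zero_smul] at this

lemma lam_zero_le (h : IsIFIdeal A μ lam) (t : L) : lam 0 ≤ lam t := by
  have := h.2.2.2.2.1 (0 : F) t
  rwa [zero_smul] at this

lemma K_zero : Kmem μ lam 0 := ⟨rfl, rfl⟩

lemma K_add (h : IsIFIdeal A μ lam) {a b : L} (ha : Kmem μ lam a) (hb : Kmem μ lam b) :
    Kmem μ lam (a + b) := by
  constructor
  · refine le_antisymm (mu_le_zero h _) ?_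
    have := h.2.1 a b
    rw [ha.1, hb.1, min_self] at this
    exact this
  · refine le_antisymm ?_ (lam_zero_le h _)
    have := h.2.2.1 a b
    rw [ha.2, hb.2, max_self] at this
    exact this

lemma K_smul (h : IsIFIdeal A μ lam) (α : F) {a : L} (ha : Kmem μ lam a) :
    Kmem μ lam (α • a) :=
  ⟨le_antisymm (mu_le_zero h _) (ha.1 ▸ h.2.2.2.1 α a),
   le_antisymm (ha.2 ▸ h.2.2.2.2.1 α a) (lam_zero_le h _)⟩

lemma K_neg (h : IsIFIdeal A μ lam) {a : L} (ha : Kmem μ lam a) : Kmem μ lam (-a) := by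
  have := K_smul h (-1 : F) ha
  rwa [neg_one_smul] at this

lemma K_bracket (h : IsIFIdeal A μ lam) {x : Fin n → L} (j : Fin n)
    (hj : Kmem μ lam (x j)) : Kmem μ lam (A.bracket x) := by
  constructor
  · refine le_antisymm (mu_le_zero h _) ?_
    calc μ 0 = μ (x j) := hj.1.symm
    _ ≤ ⨆ i, μ (x i) := le_ciSup (f := fun i => μ (x i)) (Set.Finite.bddAbove (Set.finite_range _)) j
    _ ≤ μ (A.bracket x) := h.2.2.2.2.2.1 x
  · refine le_antisymm ?_ (lam_zero_le h _)
    calc lam (A.bracket x) ≤ ⨅ i, lam (x i) := h.2.2.2.2.2.2 x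
    _ ≤ lam (x j) := ciInf_le (f := fun i => lam (x i)) (Set.Finite.bddBelow (Set.finite_range _)) j
    _ = lam 0 := hj.2

lemma coset_eq_iff (h : IsIFIdeal A μ lam) {x y : L} :
    coset μ lam x = coset μ lam y ↔ Kmem μ lam (x - y) := by
  constructor
  · intro hxy
    have hx := congrFun hxy x
    simp only [coset, sub_self] at hx
    exact ⟨(congrArg Prod.fst hx).symm, (congrArg Prod.snd hx).symm⟩
  · intro hk
    have hk' : Kmem μ lam (y - x) := by
      have := K_neg h hk; rwa [neg_sub] at this
    have key : ∀ a b : L, Kmem μ lam (b - a) → ∀ z,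
        μ (z - b) ≤ μ (z - a) ∧ lam (z - a) ≤ lam (z - b) := by
      intro a b hab z
      constructor
      · have h1 := h.2.1 (z - b) (b - a)
        have e : z - b + (b - a) = z - a := by abel
        rw [e, hab.1, min_eq_left (mu_le_zero h _)] at h1
        exact h1
      · have h1 := h.2.2.1 (z - b) (b - a)
        have e : z - b + (b - a) = z - a := by abel
        rw [e, hab.2, max_eq_left (lam_zero_le h _)] at h1
        exact h1
    funext z
    have h1 := key y x hk z
    have h2 := key x y hk' z
    exact Prod.ext (le_antisymm h1.1 h2.1) (le_antisymm h2.2 h1.2)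

lemma K_bracket_sub (h : IsIFIdeal A μ lam) {x y : Fin n → L}
    (hxy : ∀ i, Kmem μ lam (x i - y i)) :
    Kmem μ lam (A.bracket x - A.bracket y) := by
  classical
  suffices H : ∀ s : Finset (Fin n), ∀ x y : Fin n → L, (∀ i, Kmem μ lam (x i - y i)) →
      (∀ i ∉ s, x i = y i) → Kmem μ lam (A.bracket x - A.bracket y) from
    H Finset.univ x y hxy (fun i hi => absurd (Finset.mem_univ i) hi)
  intro s
  induction s using Finset.induction_on with
  | empty =>
    intro x y _ hxy2
    have hxyeq : x = y := funext fun i => hxy2 i (Finset.notMem_empty i)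
    rw [hxyeq, sub_self]
    exact K_zero
  | insert j s hj ih =>
    intro x y hxy1 hxy2
    set x' := Function.update x j (y j) with hx'
    have h1 : A.bracket x = A.bracket (Function.update x j (x j - y j)) + A.bracket x' := by
      have h2 := A.bracket.map_update_add x j (x j - y j) (y j)
      rwa [sub_add_cancel, Function.update_eq_self] at h2
    have h2 : Kmem μ lam (A.bracket (Function.update x j (x j - y j))) :=
      K_bracket h j (by simpa using hxy1 j)
    have h3 : Kmem μ lam (A.bracket x' - A.bracket y) := by
      refine ih x' y ?_ ?_
      · intro i
        rcases eq_or_ne i j with rfl | hij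
        · simpa [x'] using (K_zero : Kmem μ lam 0)
        · simpa [x', Function.update_of_ne hij] using hxy1 i
      · intro i hi
        rcases eq_or_ne i j with rfl | hij
        · simp [x']
        · have his : i ∉ insert j s := by
            simp [Finset.mem_insert, hij]
            intro hs; exact hi hs
          simpa [x', Function.update_of_ne hij] using hxy2 i his
    have e : A.bracket x - A.bracket y =
        A.bracket (Function.update x j (x j - y j)) + (A.bracket x' - A.bracket y) := by
      rw [h1]; abel
    rw [e]
    exact K_add h h2 h3

end Aux

theorem stmt18 {F : Type*} [Field F] {n : ℕ} [NeZero n] (hn : 2 ≤ n)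
    {L : Type*} [AddCommGroup L] [Module F L] (A : NLieAlgebra F n L)
    (μ lam : L → ℝ) (h : IsIFIdeal A μ lam) :
    ∃ (g : AddCommGroup (Set.range (coset μ lam))),
      letI := g
      ∃ (m : Module F (Set.range (coset μ lam))),
        letI := m
        ∃ (B : NLieAlgebra F n (Set.range (coset μ lam))),
          (∀ x y : L, (⟨coset μ lam (x + y), x + y, rfl⟩ : Set.range (coset μ lam)) =
              (⟨coset μ lam x, x, rfl⟩ : Set.range (coset μ lam)) + ⟨coset μ lam y, y, rfl⟩) ∧
          (∀ (α : F) (x : L),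
            (⟨coset μ lam (α • x), α • x, rfl⟩ : Set.range (coset μ lam)) =
              α • (⟨coset μ lam x, x, rfl⟩ : Set.range (coset μ lam))) ∧
          (∀ x : Fin n → L,
            B.bracket (fun i => (⟨coset μ lam (x i), x i, rfl⟩ : Set.range (coset μ lam))) =
              ⟨coset μ lam (A.bracket x), A.bracket x, rfl⟩) := by
  classical
  set R := Set.range (coset μ lam) with hR
  let π : L → R := fun x => ⟨coset μ lam x, x, rfl⟩
  have hsurj : Function.Surjective π := by
    rintro ⟨f, x, rfl⟩; exact ⟨x, rfl⟩
  let out : R → L := fun r => r.2.choose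
  have hout : ∀ r : R, π (out r) = r := fun r => Subtype.ext r.2.choose_spec
  have hπeq : ∀ x y : L, Kmem μ lam (x - y) → π x = π y := fun x y hk =>
    Subtype.ext ((coset_eq_iff h).2 hk)
  have hπeq' : ∀ x y : L, π x = π y → Kmem μ lam (x - y) := fun x y hxy =>
    (coset_eq_iff h).1 (congrArg Subtype.val hxy)
  have hKout : ∀ x : L, Kmem μ lam (out (π x) - x) := fun x =>
    hπeq' _ _ (hout (π x))
  have hKout' : ∀ x : L, Kmem μ lam (x - out (π x)) := by
    intro x
    have := K_neg h (hKout x); rwa [neg_sub] at this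
  -- operations
  letI zeroI : Zero R := ⟨π 0⟩
  letI addI : Add R := ⟨fun a b => π (out a + out b)⟩
  letI negI : Neg R := ⟨fun a => π (-(out a))⟩
  letI subI : Sub R := ⟨fun a b => π (out a - out b)⟩
  letI nsmulI : SMul ℕ R := ⟨fun m a => π (m • out a)⟩
  letI zsmulI : SMul ℤ R := ⟨fun m a => π (m • out a)⟩
  letI fsmulI : SMul F R := ⟨fun α a => π (α • out a)⟩
  -- preservation lemmas
  have πzero : π (0 : L) = 0 := rfl
  have πadd : ∀ x y : L, π (x + y) = π x + π y := by
    intro x y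
    show π (x + y) = π (out (π x) + out (π y))
    apply hπeq
    have e : x + y - (out (π x) + out (π y)) =
        (x - out (π x)) + (y - out (π y)) := by abel
    rw [e]
    exact K_add h (hKout' x) (hKout' y)
  have πsmulF : ∀ (α : F) (x : L), π (α • x) = α • π x := by
    intro α x
    show π (α • x) = π (α • out (π x))
    apply hπeq
    have e : α • x - α • out (π x) = α • (x - out (π x)) := by
      rw [smul_sub]
    rw [e]
    exact K_smul h α (hKout' x)
  have πneg : ∀ x : L, π (-x) = -π x := by
    intro x
    show π (-x) = π (-(out (π x)))
    apply hπeq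
    have e : -x - -out (π x) = (-(1 : F)) • (x - out (π x)) := by
      rw [neg_one_smul]; abel
    rw [e]
    exact K_smul h _ (hKout' x)
  have πsub : ∀ x y : L, π (x - y) = π x - π y := by
    intro x y
    show π (x - y) = π (out (π x) - out (π y))
    apply hπeq
    have e : x - y - (out (π x) - out (π y)) =
        (x - out (π x)) + ((-(1 : F)) • (y - out (π y))) := by
      rw [neg_one_smul]; abel
    rw [e]
    exact K_add h (hKout' x) (K_smul h _ (hKout' y))
  have πnsmul : ∀ (x : L) (m : ℕ), π (m • x) = m • π x := by
    intro x m
    show π (m • x) = π (m • out (π x))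
    apply hπeq
    have e : m • x - m • out (π x) = ((m : F)) • (x - out (π x)) := by
      rw [smul_sub, Nat.cast_smul_eq_nsmul, Nat.cast_smul_eq_nsmul]
    rw [e]
    exact K_smul h _ (hKout' x)
  have πzsmul : ∀ (x : L) (m : ℤ), π (m • x) = m • π x := by
    intro x m
    show π (m • x) = π (m • out (π x))
    apply hπeq
    have e : m • x - m • out (π x) = ((m : F)) • (x - out (π x)) := by
      rw [smul_sub, Int.cast_smul_eq_zsmul, Int.cast_smul_eq_zsmul]
    rw [e]
    exact K_smul h _ (hKout' x)
  letI g : AddCommGroup R :=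
    hsurj.addCommGroup π πzero πadd πneg πsub πnsmul πzsmul
  let πhom : L →+ R := AddMonoidHom.mk' π πadd
  letI m : Module F R := Function.Surjective.module F πhom hsurj πsmulF
  -- the bracket
  let Bf : (Fin n → R) → R := fun v => π (A.bracket (fun i => out (v i)))
  have hπbr : ∀ (v : Fin n → R) (x : Fin n → L), (∀ i, π (x i) = v i) →
      Bf v = π (A.bracket x) := by
    intro v x hv
    apply hπeq
    refine K_bracket_sub h (fun i => ?_)
    exact hπeq' _ _ ((hout (v i)).trans (hv i).symm)
  have houtv : ∀ (v : Fin n → R) (i : Fin n), π (out (v i)) = v i := fun v i => hout (v i)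
  let B : MultilinearMap F (fun _ : Fin n => R) R :=
    { toFun := Bf
      map_update_add' := by
        intro _dec v i a b
        set x : Fin n → L := fun j => out (v j) with hx
        have key : ∀ (t : R) (t' : L), π t' = t →
            Function.update v i t = fun j => π (Function.update x i t' j) := by
          intro t t' ht
          funext j
          rcases eq_or_ne j i with rfl | hij
          · rw [Function.update_self, Function.update_self, ht]
          · rw [Function.update_of_ne hij, Function.update_of_ne hij]
            exact (houtv v j).symm
        have hab : π (out a + out b) = a + b := by
          rw [πadd, hout, hout]
        rw [key (a + b) (out a + out b) hab, key a (out a) (hout a),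
          key b (out b) (hout b),
          hπbr _ _ (fun j => rfl), hπbr _ _ (fun j => rfl), hπbr _ _ (fun j => rfl),
          A.bracket.map_update_add, πadd]
      map_update_smul' := by
        intro _dec v i c a
        set x : Fin n → L := fun j => out (v j) with hx
        have key : ∀ (t : R) (t' : L), π t' = t →
            Function.update v i t = fun j => π (Function.update x i t' j) := by
          intro t t' ht
          funext j
          rcases eq_or_ne j i with rfl | hij
          · rw [Function.update_self, Function.update_self, ht]
          · rw [Function.update_of_ne hij, Function.update_of_ne hij]
            exact (houtv v j).symm
        have hca : π (c • out a) = c • a := by rw [πsmulF, hout]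
        rw [key (c • a) (c • out a) hca, key a (out a) (hout a),
          hπbr _ _ (fun j => rfl), hπbr _ _ (fun j => rfl),
          A.bracket.map_update_smul, πsmulF] }
  have hBconc : ∀ (v : Fin n → R) (x : Fin n → L), (∀ i, π (x i) = v i) →
      B v = π (A.bracket x) := hπbr
  refine ⟨g, m, ⟨B, ?_, ?_⟩, ?_, ?_, ?_⟩
  · -- skew
    intro σ v
    set x : Fin n → L := fun j => out (v j) with hx
    have h1 : B (v ∘ σ) = π (A.bracket (x ∘ σ)) :=
      hBconc _ _ (fun j => houtv v (σ j))
    have h2 : B v = π (A.bracket x) := hBconc _ _ (houtv v)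
    rw [h1, h2, A.skew σ x]
    exact πzsmul _ _
  · -- Filippov
    intro v w
    set x : Fin n → L := fun j => out (v j) with hx
    set y : Fin n → L := fun j => out (w j) with hy
    have hv : ∀ j, π (x j) = v j := houtv v
    have hw : ∀ j, π (y j) = w j := houtv w
    have hBv : B v = π (A.bracket x) := hBconc _ _ hv
    have hupdate : ∀ (u : Fin n → R) (z : Fin n → L), (∀ j, π (z j) = u j) →
        ∀ (i : Fin n) (t : R) (t' : L), π t' = t →
        ∀ j, π (Function.update z i t' j) = Function.update u i t j := by
      intro u z hz i t t' ht j
      rcases eq_or_ne j i with rfl | hij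
      · rw [Function.update_self, Function.update_self, ht]
      · rw [Function.update_of_ne hij, Function.update_of_ne hij]
        exact hz j
    have hLHS : B (Function.update w 0 (B v)) =
        π (A.bracket (Function.update y 0 (A.bracket x))) :=
      hBconc _ _ (hupdate w y hw 0 (B v) (A.bracket x) hBv.symm)
    have hterm : ∀ i : Fin n,
        B (Function.update v i (B (Function.update w 0 (v i)))) =
        π (A.bracket (Function.update x i
          (A.bracket (Function.update y 0 (x i))))) := by
      intro i
      have hin : B (Function.update w 0 (v i)) =
          π (A.bracket (Function.update y 0 (x i))) :=
        hBconc _ _ (hupdate w y hw 0 (v i) (x i) (hv i))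
      exact hBconc _ _ (hupdate v x hv i _ _ hin.symm)
    have πsum : ∀ (s : Finset (Fin n)) (f : Fin n → L),
        π (∑ i ∈ s, f i) = ∑ i ∈ s, π (f i) := by
      intro s f
      induction s using Finset.cons_induction with
      | empty => simpa using πzero
      | cons j s hj ih => rw [Finset.sum_cons, Finset.sum_cons, πadd, ih]
    rw [hLHS, A.filippov x y, πsum]
    exact Finset.sum_congr rfl (fun i _ => (hterm i).symm)
  · -- add
    intro x y
    exact πadd x y
  · -- smul
    intro α x
    exact πsmulF α x
  · -- bracket
    intro x
    exact hBconc _ _ (fun i => rfl)
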